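/- For every real x ≥ 0, Q(x) = (1/π) ∫₀^{π/2} exp(-x²/(2 sin²θ)) dθ, where Q(x) = ∫ₓ^∞ (1/√(2π)) e^{-t²/2} dt is the Gaussian tail function (Craig's formula). -/

import Mathlib

open Real MeasureTheory

lemma texp_le {c t : ℝ} (hc : 0 < c) (ht : 0 ≤ t) : t * Real.exp (-(c*t)) ≤ 1/c := by
  have h1 : c*t ≤ Real.exp (c*t) := by nlinarith [Real.add_one_le_exp (c*t)]
  rw [Real.exp_neg, mul_inv_le_iff₀' (Real.exp_pos _), one_div, le_mul_inv_iff₀ hc]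
  nlinarith

lemma gauss_Ioi : ∫ t in Set.Ioi (0:ℝ), Real.exp (-t^2/2) = Real.sqrt (2*π)/2 := by
  have h : ∀ t:ℝ, -t^2/2 = -(1/2:ℝ)*t^2 := fun t => by ring
  simp_rw [h, integral_gaussian_Ioi]
  norm_num [div_div_eq_mul_div]
  ring

lemma arctan_image {x : ℝ} (hx : 0 < x) :
    (fun u => Real.arctan (x/u)) '' Set.Ioi 0 = Set.Ioo 0 (π/2) := by
  ext θ
  constructor
  · rintro ⟨u, hu, rfl⟩
    have := Real.arctan_strictMono (div_pos hx hu)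
    rw [Real.arctan_zero] at this
    exact ⟨this, Real.arctan_lt_pi_div_two _⟩
  · rintro ⟨h1, h2⟩
    have htan : 0 < Real.tan θ := Real.tan_pos_of_pos_of_lt_pi_div_two h1 h2
    refine ⟨x / Real.tan θ, div_pos hx htan, ?_⟩
    show Real.arctan (x / (x / Real.tan θ)) = θ
    have hxt : x / (x / Real.tan θ) = Real.tan θ := by field_simp
    rw [hxt, Real.arctan_tan (by linarith [Real.pi_pos]) h2]

lemma arctan_deriv {x : ℝ} (hx : 0 < x) {u : ℝ} (hu : 0 < u) :
    HasDerivAt (fun u => Real.arctan (x/u)) (-(x/(u^2+x^2))) u := by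
  have h1 : HasDerivAt (fun u : ℝ => x / u) (x * (-(u^2)⁻¹)) u := by
    simpa [div_eq_mul_inv] using (hasDerivAt_inv hu.ne').const_mul x
  have h2 := (Real.hasDerivAt_arctan (x/u)).comp u h1
  refine h2.congr_deriv ?_
  field_simp

lemma sin_arctan_sq {x u : ℝ} (hx : 0 < x) (hu : 0 < u) :
    Real.sin (Real.arctan (x/u)) ^ 2 = x^2 / (u^2 + x^2) := by
  rw [Real.sin_arctan]
  rw [div_pow, div_pow, Real.sq_sqrt (by positivity)]
  field_simp

lemma J_eval {x : ℝ} (hx : 0 < x) :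
    ∫ θ in Set.Ioc (0:ℝ) (π/2),
        Real.exp (-x^2/(2*Real.sin θ^2)) * (-(x / Real.sin θ^2))
      = -(Real.exp (-x^2/2) * (Real.sqrt (2*π)/2)) := by
  rw [MeasureTheory.integral_Ioc_eq_integral_Ioo, ← arctan_image hx]
  rw [integral_image_eq_integral_abs_deriv_smul measurableSet_Ioi
      (fun u hu => (arctan_deriv hx hu).hasDerivWithinAt)
      (fun u hu v hv huv => ?_)
      (fun θ => Real.exp (-x^2/(2*Real.sin θ^2)) * (-(x / Real.sin θ^2)))]
  · rw [show -(Real.exp (-x^2/2) * (Real.sqrt (2*π)/2))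
        = ∫ u in Set.Ioi (0:ℝ), -(Real.exp (-x^2/2) * Real.exp (-u^2/2)) by
      rw [integral_neg, MeasureTheory.integral_const_mul, gauss_Ioi]]
    apply setIntegral_congr_fun measurableSet_Ioi
    intro u hu
    simp only [smul_eq_mul]
    have hu : (0:ℝ) < u := hu
    have hs := sin_arctan_sq hx hu
    rw [hs]
    have h1 : |-(x/(u^2+x^2))| = x/(u^2+x^2) := by
      rw [abs_neg, abs_of_pos (by positivity)]
    rw [h1]
    have h2 : -x^2/(2*(x^2/(u^2+x^2))) = -x^2/2 + -u^2/2 := by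
      field_simp
      ring
    rw [h2, Real.exp_add]
    field_simp
  · -- injectivity
    have h1 : x / u = x / v := Real.arctan_injective huv
    have hu : (0:ℝ) < u := hu
    have hv : (0:ℝ) < v := hv
    field_simp at h1
    exact h1.symm

lemma inner_deriv {c : ℝ} (hc : c ≠ 0) (y : ℝ) :
    HasDerivAt (fun y : ℝ => Real.exp (-y^2/(2*c^2)))
      (Real.exp (-y^2/(2*c^2)) * (-(y/c^2))) y := by
  have h1 : HasDerivAt (fun y : ℝ => -y^2/(2*c^2)) (-(y/c^2)) y := by
    have h := ((hasDerivAt_pow 2 y).div_const (2*c^2)).neg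
    have he : (fun y : ℝ => -y^2/(2*c^2)) = fun y : ℝ => -(y^2/(2*c^2)) := by
      funext z; ring
    rw [he]
    refine h.congr_deriv ?_
    field_simp
    ring
  exact h1.exp

lemma meas_F (y : ℝ) :
    AEStronglyMeasurable (fun θ : ℝ => Real.exp (-y^2/(2*Real.sin θ^2)))
      (volume.restrict (Set.Ioc 0 (π/2))) := by
  apply Measurable.aestronglyMeasurable
  fun_prop

lemma meas_F' (y : ℝ) :
    AEStronglyMeasurable
      (fun θ : ℝ => Real.exp (-y^2/(2*Real.sin θ^2)) * (-(y / Real.sin θ^2)))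
      (volume.restrict (Set.Ioc 0 (π/2))) := by
  apply Measurable.aestronglyMeasurable
  fun_prop

lemma sin_pos_Ioc {θ : ℝ} (hθ : θ ∈ Set.Ioc (0:ℝ) (π/2)) : 0 < Real.sin θ :=
  Real.sin_pos_of_pos_of_lt_pi hθ.1 (lt_of_le_of_lt hθ.2 (by linarith [Real.pi_pos]))

lemma hasDeriv_G {x₀ : ℝ} (hx₀ : 0 < x₀) :
    HasDerivAt (fun y => ∫ θ in Set.Ioc (0:ℝ) (π/2), Real.exp (-y^2/(2*Real.sin θ^2)))
      (-(Real.exp (-x₀^2/2) * (Real.sqrt (2*π)/2))) x₀ := by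
  have key := hasDerivAt_integral_of_dominated_loc_of_deriv_le
    (μ := volume.restrict (Set.Ioc 0 (π/2)))
    (F := fun y θ => Real.exp (-y^2/(2*Real.sin θ^2)))
    (F' := fun y θ => Real.exp (-y^2/(2*Real.sin θ^2)) * (-(y / Real.sin θ^2)))
    (x₀ := x₀) (bound := fun _ => 12/x₀) (s := Metric.ball x₀ (x₀/2))
    (Metric.ball_mem_nhds _ (by positivity))
    (Filter.Eventually.of_forall meas_F)
    ?_ (meas_F' x₀) ?_ ?_ ?_
  · rw [J_eval hx₀] at key
    exact key.2
  · -- integrability of F x₀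
    apply Integrable.mono' (g := fun _ : ℝ => (1:ℝ))
      (by rw [integrable_const_iff]; right
          exact ⟨by simp [Real.volume_Ioc]⟩)
      (meas_F x₀)
    filter_upwards with θ
    rw [Real.norm_eq_abs, Real.abs_exp, Real.exp_le_one_iff]
    apply div_nonpos_of_nonpos_of_nonneg (neg_nonpos.mpr (sq_nonneg _)) (by positivity)
  · -- bound
    filter_upwards [ae_restrict_mem measurableSet_Ioc] with θ hθ y hy
    have hs : 0 < Real.sin θ := sin_pos_Ioc hθ
    have hs1 : Real.sin θ ≤ 1 := Real.sin_le_one θ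
    have hs2 : 0 < Real.sin θ ^ 2 := by positivity
    rw [Metric.mem_ball, Real.dist_eq, abs_lt] at hy
    have hy1 : x₀/2 < y := by linarith
    have hy2 : y < 3*x₀/2 := by linarith
    have hy0 : 0 < y := lt_trans (by positivity) hy1
    rw [Real.norm_eq_abs, abs_mul, Real.abs_exp, abs_neg,
      abs_of_pos (by positivity : 0 < y / Real.sin θ^2)]
    have step1 : Real.exp (-y^2/(2*Real.sin θ^2)) ≤
        Real.exp (-((x₀^2/8) * (Real.sin θ^2)⁻¹)) := by
      rw [Real.exp_le_exp, ← div_eq_mul_inv, ← neg_div, div_le_div_iff₀ (by positivity) hs2]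
      nlinarith [mul_le_mul_of_nonneg_right (show x₀^2/4 ≤ y^2 by nlinarith) hs2.le]
    have step2 : y / Real.sin θ^2 ≤ (3*x₀/2) * (Real.sin θ^2)⁻¹ := by
      rw [div_eq_mul_inv]
      gcongr
    calc Real.exp (-y^2/(2*Real.sin θ^2)) * (y / Real.sin θ^2)
        ≤ Real.exp (-((x₀^2/8) * (Real.sin θ^2)⁻¹)) * ((3*x₀/2) * (Real.sin θ^2)⁻¹) := by
          apply mul_le_mul step1 step2 (by positivity) (by positivity)
      _ = (3*x₀/2) * ((Real.sin θ^2)⁻¹ * Real.exp (-((x₀^2/8) * (Real.sin θ^2)⁻¹))) := by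
          ring
      _ ≤ (3*x₀/2) * (1/(x₀^2/8)) := by
          gcongr
          exact texp_le (by positivity) (by positivity)
      _ = 12/x₀ := by field_simp; ring
  · -- bound integrable
    rw [integrable_const_iff]; right
    exact ⟨by simp [Real.volume_Ioc]⟩
  · -- differentiability
    filter_upwards [ae_restrict_mem measurableSet_Ioc] with θ hθ y hy
    exact inner_deriv (sin_pos_Ioc hθ).ne' y

lemma phi_integrable : Integrable (fun t : ℝ => (1/Real.sqrt (2*π)) * Real.exp (-t^2/2)) := by
  have h : ∀ t:ℝ, -t^2/2 = -(1/2:ℝ)*t^2 := fun t => by ring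
  simp_rw [h]
  exact (integrable_exp_neg_mul_sq (by norm_num)).const_mul _

lemma phi_continuous : Continuous (fun t : ℝ => (1/Real.sqrt (2*π)) * Real.exp (-t^2/2)) := by
  fun_prop

lemma I_val : ∫ t in Set.Ioi (0:ℝ), (1/Real.sqrt (2*π)) * Real.exp (-t^2/2) = 1/2 := by
  rw [MeasureTheory.integral_const_mul, gauss_Ioi]
  have hs : (0:ℝ) < Real.sqrt (2*π) := Real.sqrt_pos.mpr (by positivity)
  have h2π : Real.sqrt (2*π) ^ 2 = 2*π := Real.sq_sqrt (by positivity)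
  field_simp

lemma g0_val : ∫ θ in Set.Ioc (0:ℝ) (π/2), Real.exp (-(0:ℝ)^2/(2*Real.sin θ^2)) = π/2 := by
  have h : ∀ θ:ℝ, Real.exp (-(0:ℝ)^2/(2*Real.sin θ^2)) = 1 := by intro θ; norm_num
  simp_rw [h]
  rw [setIntegral_const, Real.volume_real_Ioc_of_le (by linarith [Real.pi_pos] : (0:ℝ) ≤ π/2),
    smul_eq_mul, mul_one]
  ring

lemma deriv_val_eq {y : ℝ} :
    (1/π) * (-(Real.exp (-y^2/2) * (Real.sqrt (2*π)/2)))
      = -((1/Real.sqrt (2*π)) * Real.exp (-y^2/2)) := by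
  have hs : (0:ℝ) < Real.sqrt (2*π) := Real.sqrt_pos.mpr (by positivity)
  have h2π : Real.sqrt (2*π) ^ 2 = 2*π := Real.sq_sqrt (by positivity)
  have hπ : (0:ℝ) < π := Real.pi_pos
  have hss : Real.sqrt 2 * Real.sqrt π * (Real.sqrt 2 * Real.sqrt π) = 2*π := by
    rw [← Real.sqrt_mul (by norm_num : (0:ℝ) ≤ 2) π]
    exact Real.mul_self_sqrt (by positivity)
  field_simp
  linear_combination (-1 : ℝ) * (Real.sq_sqrt (by positivity : (0:ℝ) ≤ π * 2))

/-- Craig's formula for the Gaussian tail function. -/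
theorem craig_formula (x : ℝ) (hx : 0 ≤ x) :
    ∫ t in Set.Ioi x, (1 / Real.sqrt (2 * π)) * Real.exp (-t ^ 2 / 2) =
      (1 / π) * ∫ θ in (0 : ℝ)..(π / 2), Real.exp (-x ^ 2 / (2 * Real.sin θ ^ 2)) := by
  have hπ : (0:ℝ) < π := Real.pi_pos
  have hle : (0:ℝ) ≤ π/2 := by linarith
  -- convert interval integral to set integral
  rw [intervalIntegral.integral_of_le hle]
  rcases hx.eq_or_lt with h0 | hxpos
  · -- x = 0
    subst h0
    rw [I_val, g0_val]
    field_simp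
  · -- x > 0
    set φ : ℝ → ℝ := fun t => (1/Real.sqrt (2*π)) * Real.exp (-t^2/2) with hφ
    set I : ℝ := ∫ t in Set.Ioi (0:ℝ), φ t with hI
    set f : ℝ → ℝ := fun y => I - ∫ t in (0:ℝ)..y, φ t with hf
    set g : ℝ → ℝ := fun y =>
      (1/π) * ∫ θ in Set.Ioc (0:ℝ) (π/2), Real.exp (-y^2/(2*Real.sin θ^2)) with hg
    have hIoc_fin : volume (Set.Ioc (0:ℝ) (π/2)) < ⊤ := by
      rw [Real.volume_Ioc]; exact ENNReal.ofReal_lt_top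
    -- LHS = f x
    have hLHS : ∫ t in Set.Ioi x, φ t = f x := by
      have hdisj : Disjoint (Set.Ioc 0 x) (Set.Ioi x) := by
        rw [Set.disjoint_left]
        rintro a ⟨_, h1⟩ h2
        exact absurd h2 h1.not_gt
      have hunion : Set.Ioc 0 x ∪ Set.Ioi x = Set.Ioi 0 := Set.Ioc_union_Ioi_eq_Ioi hx
      have := MeasureTheory.setIntegral_union hdisj measurableSet_Ioi
        (phi_integrable.integrableOn) (phi_integrable.integrableOn) (f := φ)
      rw [hunion] at this
      rw [hf]
      simp only
      rw [intervalIntegral.integral_of_le hx, hI, this]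
      ring
    rw [hLHS]
    show f x = g x
    -- continuity of f
    have hcf : ContinuousOn f (Set.Icc 0 x) :=
      (continuous_const.sub (intervalIntegral.continuous_primitive
        (fun a b => phi_integrable.intervalIntegrable) 0)).continuousOn
    -- continuity of g
    have hcg : ContinuousOn g (Set.Icc 0 x) := by
      apply ContinuousOn.mul continuousOn_const
      apply MeasureTheory.continuousOn_of_dominated (bound := fun _ => (1:ℝ))
        (fun y _ => meas_F y)
      · intro y _
        filter_upwards with θ
        rw [Real.norm_eq_abs, Real.abs_exp, Real.exp_le_one_iff]
        exact div_nonpos_of_nonpos_of_nonneg (neg_nonpos.mpr (sq_nonneg _)) (by positivity)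
      · rw [integrable_const_iff]; right; exact ⟨by rwa [Measure.restrict_apply_univ]⟩
      · filter_upwards [ae_restrict_mem measurableSet_Ioc] with θ hθ
        have hs : 0 < Real.sin θ := sin_pos_Ioc hθ
        exact (((continuous_pow 2).neg.div_const (2*Real.sin θ^2)).rexp).continuousOn
    -- derivatives agree on Ioo 0 x
    have hderiv : ∀ y ∈ Set.Ioo (0:ℝ) x, HasDerivAt (fun z => f z - g z) 0 y := by
      intro y hy
      have hfd : HasDerivAt f (-(φ y)) y := by
        apply HasDerivAt.const_sub
        exact intervalIntegral.integral_hasDerivAt_right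
          (phi_integrable.intervalIntegrable)
          (phi_continuous.stronglyMeasurableAtFilter _ _)
          phi_continuous.continuousAt
      have hgd : HasDerivAt g (-(φ y)) y := by
        have := (hasDeriv_G hy.1).const_mul (1/π)
        rw [deriv_val_eq] at this
        exact this
      have := hfd.sub hgd
      exact this.congr_deriv (sub_self _)
    -- MVT
    obtain ⟨c, hc, hceq⟩ := exists_hasDerivAt_eq_slope (fun z => f z - g z) (fun _ => 0)
      hxpos (hcf.sub hcg) hderiv
    have h0' : f 0 - g 0 = 0 := by
      rw [hf, hg]
      simp only [intervalIntegral.integral_same, sub_zero, hI]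
      rw [I_val, g0_val]
      field_simp
      ring
    have : f x - g x = 0 := by
      have hx0 : x - 0 ≠ 0 := by linarith
      rw [eq_comm, div_eq_zero_iff] at hceq
      rcases hceq with h | h
      · rw [h0'] at h; linarith
      · exact absurd h hx0
    linarith
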